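/- Suppose the pair (A, [B N]) is controllable (its reachable subspace is all of ℝ^n). Consider data of the bilinear system up to time t ≥ T, and suppose G_T(t) is not full row rank. If the 'new column' vector [x(t−T+1); u_{[t−T+1,t−1]}; (x⊗u)_{[t−T+1,t−1]}] lies in the image of [H_1(x_{[0,t−T]}); H_{T−1}(u_{[0,t−2]}); H_{T−1}((x⊗u)_{[0,t−2]})], then there exists a nonzero vector [ξ; η_1; …; η_T; χ_1; …; χ_T] in the left kernel of G_T(t) with (η_T, χ_T) ≠ (0, 0). -/

import Mathlib

open Matrix Finset

noncomputable section

/-- Kronecker product of vectors `x ∈ ℝ^n`, `u ∈ ℝ^m`, indexed by `Fin n × Fin m`. -/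
def kron {n m : ℕ} (x : Fin n → ℝ) (u : Fin m → ℝ) : Fin n × Fin m → ℝ :=
  fun p => x p.1 * u p.2

/-- One step of the bilinear dynamics `x⁺ = A x + B u + N (x ⊗ u)`. -/
def BilinStep {n m : ℕ} (A : Matrix (Fin n) (Fin n) ℝ) (B : Matrix (Fin n) (Fin m) ℝ)
    (N : Matrix (Fin n) (Fin n × Fin m) ℝ) (x : Fin n → ℝ) (u : Fin m → ℝ) : Fin n → ℝ :=
  A.mulVec x + B.mulVec u + N.mulVec (kron x u)

/-- The data matrix `G_T(L) = [H_1(x_{[0,L-T]}); H_T(u_{[0,L-1]}); H_T((x⊗u)_{[0,L-1]})]`. -/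
def GT {n m : ℕ} (x : ℕ → Fin n → ℝ) (u : ℕ → Fin m → ℝ) (T L : ℕ) :
    Matrix (Fin n ⊕ (Fin T × Fin m ⊕ Fin T × (Fin n × Fin m))) (Fin (L - T + 1)) ℝ :=
  Matrix.of fun r q =>
    match r with
    | Sum.inl a => x q a
    | Sum.inr (Sum.inl (i, b)) => u ((q : ℕ) + i) b
    | Sum.inr (Sum.inr (i, p)) => kron (x ((q : ℕ) + i)) (u ((q : ℕ) + i)) p

/-- Controllability matrix of the pair `(A, [B N])`. -/
def ctrbMat {n m : ℕ} (A : Matrix (Fin n) (Fin n) ℝ) (B : Matrix (Fin n) (Fin m) ℝ)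
    (N : Matrix (Fin n) (Fin n × Fin m) ℝ) :
    Matrix (Fin n) (Fin n × (Fin m ⊕ Fin n × Fin m)) ℝ :=
  Matrix.of fun a kj => (A ^ (kj.1 : ℕ) * Matrix.fromCols B N) a kj.2


private lemma dot_sum' {ι k : Type*} [Fintype k] (s : Finset ι) (v : k → ℝ) (f : ι → k → ℝ) :
    v ⬝ᵥ (∑ i ∈ s, f i) = ∑ i ∈ s, v ⬝ᵥ f i := by
  simp only [dotProduct, Finset.sum_apply, Finset.mul_sum]
  exact Finset.sum_comm

private lemma exists_left_ker {k l : Type*} [Fintype k] [Fintype l] (M : Matrix k l ℝ)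
    (h : M.rank < Fintype.card k) : ∃ v : k → ℝ, v ≠ 0 ∧ Mᵀ.mulVec v = 0 := by
  have h2 : Module.finrank ℝ (LinearMap.range Mᵀ.mulVecLin) = M.rank := by
    rw [← Matrix.rank_transpose M]; rfl
  have h1 : LinearMap.ker Mᵀ.mulVecLin ≠ ⊥ := by
    intro hk
    have := LinearMap.finrank_range_add_finrank_ker Mᵀ.mulVecLin
    rw [hk, finrank_bot ℝ _, h2, Module.finrank_fintype_fun_eq_card] at this
    omega
  obtain ⟨v, hv, hv0⟩ := (Submodule.ne_bot_iff _).1 h1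
  exact ⟨v, hv0, hv⟩

private lemma left_ker_eq_zero {k l : Type*} [Fintype k] [Fintype l] (M : Matrix k l ℝ)
    (h : M.rank = Fintype.card k) (v : k → ℝ) (hv : Mᵀ.mulVec v = 0) : v = 0 := by
  have h2 : Module.finrank ℝ (LinearMap.range Mᵀ.mulVecLin) = M.rank := by
    rw [← Matrix.rank_transpose M]; rfl
  have h1 : LinearMap.ker Mᵀ.mulVecLin = ⊥ := by
    have := LinearMap.finrank_range_add_finrank_ker Mᵀ.mulVecLin
    rw [h2, h, Module.finrank_fintype_fun_eq_card] at this
    exact Submodule.finrank_eq_zero.1 (by omega)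
  have : v ∈ LinearMap.ker Mᵀ.mulVecLin := hv
  rw [h1, Submodule.mem_bot] at this
  exact this

private def stepz {n m : ℕ} (A : Matrix (Fin n) (Fin n) ℝ) (B : Matrix (Fin n) (Fin m) ℝ)
    (N : Matrix (Fin n) (Fin n × Fin m) ℝ)
    (z : (Fin n → ℝ) × (ℕ → Fin m → ℝ) × (ℕ → Fin n × Fin m → ℝ)) :
    (Fin n → ℝ) × (ℕ → Fin m → ℝ) × (ℕ → Fin n × Fin m → ℝ) :=
  (Matrix.vecMul z.1 A,
   fun i => if i = 0 then Matrix.vecMul z.1 B else z.2.1 (i - 1),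
   fun i => if i = 0 then Matrix.vecMul z.1 N else z.2.2 (i - 1))

private def IsKer {n m : ℕ} (x : ℕ → Fin n → ℝ) (u : ℕ → Fin m → ℝ) (T L : ℕ)
    (z : (Fin n → ℝ) × (ℕ → Fin m → ℝ) × (ℕ → Fin n × Fin m → ℝ)) : Prop :=
  ∀ q ≤ L, z.1 ⬝ᵥ x q + (∑ i ∈ Finset.range T, z.2.1 i ⬝ᵥ u (q + i))
    + (∑ i ∈ Finset.range T, z.2.2 i ⬝ᵥ kron (x (q + i)) (u (q + i))) = 0

/-- Proposition 2: if `(A,[B N])` is controllable, `G_T(t)` is not full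
row rank, and the new column lies in the image of the shortened data matrix, then the
left kernel of `G_T(t)` contains a vector `[ξ; η₁;…;η_T; χ₁;…;χ_T]` with
`(η_T, χ_T) ≠ (0,0)`. -/
theorem left_kernel_last_block_nonzero {n m : ℕ} (T t : ℕ)
    (hT : 1 ≤ T) (hTt : T ≤ t)
    (A : Matrix (Fin n) (Fin n) ℝ) (B : Matrix (Fin n) (Fin m) ℝ)
    (N : Matrix (Fin n) (Fin n × Fin m) ℝ)
    (hctrb : (ctrbMat A B N).rank = n)
    (x : ℕ → Fin n → ℝ) (u : ℕ → Fin m → ℝ)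
    (hx : ∀ s < t, x (s + 1) = BilinStep A B N (x s) (u s))
    (hnotfull : (GT x u T t).rank ≠
      Fintype.card (Fin n ⊕ (Fin T × Fin m ⊕ Fin T × (Fin n × Fin m))))
    (himg : ∃ β : Fin (t - T + 1) → ℝ,
      x (t - T + 1) = (∑ q : Fin (t - T + 1), β q • x q) ∧
      (∀ i : Fin (T - 1), u (t - T + 1 + i) =
        ∑ q : Fin (t - T + 1), β q • u (q + i)) ∧
      (∀ i : Fin (T - 1), kron (x (t - T + 1 + i)) (u (t - T + 1 + i)) =
        ∑ q : Fin (t - T + 1), β q • kron (x ((q : ℕ) + i)) (u ((q : ℕ) + i)))) :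
    ∃ (ξ : Fin n → ℝ) (η : Fin T → Fin m → ℝ) (χ : Fin T → Fin n × Fin m → ℝ),
      (∀ q : Fin (t - T + 1),
        (∑ a, ξ a * x q a) +
        (∑ i : Fin T, ∑ b, η i b * u ((q : ℕ) + i) b) +
        (∑ i : Fin T, ∑ p, χ i p * kron (x ((q : ℕ) + i)) (u ((q : ℕ) + i)) p) = 0) ∧
      (η ⟨T - 1, by omega⟩ ≠ 0 ∨ χ ⟨T - 1, by omega⟩ ≠ 0) := by
  
  classical
  obtain ⟨T', rfl⟩ : ∃ T', T = T' + 1 := ⟨T - 1, by omega⟩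
  by_contra hcon
  push_neg at hcon
  set L : ℕ := t - (T' + 1) with hLdef
  obtain ⟨β, hβx, hβu, hβw⟩ := himg
  have hrank : (GT x u (T'+1) t).rank <
      Fintype.card (Fin n ⊕ (Fin (T'+1) × Fin m ⊕ Fin (T'+1) × (Fin n × Fin m))) :=
    lt_of_le_of_ne (Matrix.rank_le_card_height _) hnotfull
  obtain ⟨v, hvne, hv0⟩ := exists_left_ker _ hrank
  set ξ₀ : Fin n → ℝ := fun a => v (Sum.inl a) with hξ₀
  set η₀ : ℕ → Fin m → ℝ :=
    fun i b => if h : i < T' + 1 then v (Sum.inr (Sum.inl (⟨i, h⟩, b))) else 0 with hη₀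
  set χ₀ : ℕ → Fin n × Fin m → ℝ :=
    fun i p => if h : i < T' + 1 then v (Sum.inr (Sum.inr (⟨i, h⟩, p))) else 0 with hχ₀
  have hconv : ∀ (ξ : Fin n → ℝ) (η : ℕ → Fin m → ℝ) (χ : ℕ → Fin n × Fin m → ℝ) (q : ℕ),
      ((∑ a, ξ a * x q a) + (∑ i : Fin (T'+1), ∑ b, η ↑i b * u (q + ↑i) b)
        + (∑ i : Fin (T'+1), ∑ p, χ ↑i p * kron (x (q + ↑i)) (u (q + ↑i)) p))
      = ξ ⬝ᵥ x q + (∑ i ∈ range (T'+1), η i ⬝ᵥ u (q + i))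
        + (∑ i ∈ range (T'+1), χ i ⬝ᵥ kron (x (q + i)) (u (q + i))) := by
    intro ξ η χ q
    rw [Fin.sum_univ_eq_sum_range (fun i => ∑ b, η i b * u (q + i) b),
        Fin.sum_univ_eq_sum_range (fun i => ∑ p, χ i p * kron (x (q + i)) (u (q + i)) p)]
    rfl
  have hker : ∀ z, IsKer x u (T'+1) L z → z.2.1 T' = 0 ∧ z.2.2 T' = 0 := by
    intro z hz
    exact hcon z.1 (fun i : Fin (T'+1) => z.2.1 ↑i) (fun i : Fin (T'+1) => z.2.2 ↑i)
      (fun q => by rw [hconv]; exact hz ↑q (by have := q.isLt; omega))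
  have hP0 : IsKer x u (T'+1) L (ξ₀, η₀, χ₀) := by
    intro q hq
    have h := congrFun hv0 (⟨q, by omega⟩ : Fin (t - (T'+1) + 1))
    rw [Pi.zero_apply] at h
    show ξ₀ ⬝ᵥ x q + (∑ i ∈ range (T'+1), η₀ i ⬝ᵥ u (q + i))
      + (∑ i ∈ range (T'+1), χ₀ i ⬝ᵥ kron (x (q + i)) (u (q + i))) = 0
    rw [← hconv ξ₀ η₀ χ₀ q]
    simp only [Matrix.mulVec, dotProduct, Matrix.transpose_apply, GT,
      Fintype.sum_sum_type, Fintype.sum_prod_type, Matrix.of_apply, hη₀, hχ₀, hξ₀,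
      Fin.is_lt, dif_pos, Fin.eta, mul_comm] at h ⊢
    linarith [h]
  have key : ∀ (ξ : Fin n → ℝ) (s : ℕ), s < t →
      ξ ⬝ᵥ x (s+1) = (ξ ᵥ* A) ⬝ᵥ x s + (ξ ᵥ* B) ⬝ᵥ u s + (ξ ᵥ* N) ⬝ᵥ kron (x s) (u s) := by
    intro ξ s hs
    rw [hx s hs]
    simp [BilinStep, dotProduct_add, dotProduct_mulVec]
  have hshift : ∀ z, IsKer x u (T'+1) L z → z.2.1 T' = 0 → z.2.2 T' = 0 →
      IsKer x u (T'+1) L (stepz A B N z) := by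
    rintro ⟨ξ, η, χ⟩ hz hη hχ q hq
    replace hη : η T' = 0 := hη
    replace hχ : χ T' = 0 := hχ
    show (ξ ᵥ* A) ⬝ᵥ x q
        + (∑ i ∈ range (T'+1), (fun i => if i = 0 then ξ ᵥ* B else η (i-1)) i ⬝ᵥ u (q + i))
        + (∑ i ∈ range (T'+1), (fun i => if i = 0 then ξ ᵥ* N else χ (i-1)) i ⬝ᵥ kron (x (q + i)) (u (q + i))) = 0
    simp only [Finset.sum_range_succ']
    simp only [Nat.add_eq_zero, one_ne_zero, and_false, if_false, if_true, Nat.add_sub_cancel, Nat.add_zero]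
    have hcol : ∀ p : ℕ, p ≤ L → ξ ⬝ᵥ x p + (∑ i ∈ range T', η i ⬝ᵥ u (p + i))
        + (∑ i ∈ range T', χ i ⬝ᵥ kron (x (p + i)) (u (p + i))) = 0 := by
      intro p hp
      have h0 := hz p hp
      simp only [Finset.sum_range_succ, hη, hχ, zero_dotProduct, add_zero] at h0
      exact h0
    have e1 := key ξ q (by omega)
    rcases Nat.lt_or_ge q L with hqL | hqL
    · have h0 := hz (q+1) (by omega)
      simp only [Finset.sum_range_succ, hη, hχ, zero_dotProduct, add_zero] at h0
      simp only [show ∀ i : ℕ, q + 1 + i = q + (i+1) from fun i => by omega] at h0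
      linarith [h0, e1]
    · have hqeq : q = L := le_antisymm hq hqL
      have hnew : ξ ⬝ᵥ x (q+1) + (∑ i ∈ range T', η i ⬝ᵥ u (q+(i+1)))
          + (∑ i ∈ range T', χ i ⬝ᵥ kron (x (q+(i+1))) (u (q+(i+1)))) = 0 := by
        have e2 : ξ ⬝ᵥ x (q+1) = ∑ p : Fin (L+1), β p * (ξ ⬝ᵥ x ↑p) := by
          rw [show x (q+1) = ∑ p : Fin (L+1), β p • x ↑p from by rw [hqeq]; exact hβx, dot_sum']
          simp [smul_eq_mul]
        have e3 : ∀ i, i < T' → η i ⬝ᵥ u (q+(i+1)) = ∑ p : Fin (L+1), β p * (η i ⬝ᵥ u (↑p + i)) := by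
          intro i hi
          rw [show q+(i+1) = L+1+i from by omega,
            show u (L+1+i) = ∑ p : Fin (L+1), β p • u (↑p + i) from hβu ⟨i, by omega⟩, dot_sum']
          simp [smul_eq_mul]
        have e4 : ∀ i, i < T' → χ i ⬝ᵥ kron (x (q+(i+1))) (u (q+(i+1)))
            = ∑ p : Fin (L+1), β p * (χ i ⬝ᵥ kron (x (↑p + i)) (u (↑p + i))) := by
          intro i hi
          rw [show q+(i+1) = L+1+i from by omega,
            show kron (x (L+1+i)) (u (L+1+i)) = ∑ p : Fin (L+1), β p • kron (x (↑p + i)) (u (↑p + i))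
              from hβw ⟨i, by omega⟩, dot_sum']
          simp [smul_eq_mul]
        have comm1 : (∑ i ∈ range T', ∑ p : Fin (L+1), β p * (η i ⬝ᵥ u (↑p + i)))
            = ∑ p : Fin (L+1), ∑ i ∈ range T', β p * (η i ⬝ᵥ u (↑p + i)) := Finset.sum_comm
        have comm2 : (∑ i ∈ range T', ∑ p : Fin (L+1), β p * (χ i ⬝ᵥ kron (x (↑p + i)) (u (↑p + i))))
            = ∑ p : Fin (L+1), ∑ i ∈ range T', β p * (χ i ⬝ᵥ kron (x (↑p + i)) (u (↑p + i))) := Finset.sum_comm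
        rw [e2, Finset.sum_congr rfl (fun i hi => e3 i (mem_range.mp hi)),
            Finset.sum_congr rfl (fun i hi => e4 i (mem_range.mp hi)), comm1, comm2,
            ← Finset.sum_add_distrib, ← Finset.sum_add_distrib]
        refine Finset.sum_eq_zero fun p _ => ?_
        rw [← Finset.mul_sum, ← Finset.mul_sum, ← mul_add, ← mul_add,
          hcol ↑p (by have := p.isLt; omega), mul_zero]
      linarith [e1, hnew]
  set Z : ℕ → (Fin n → ℝ) × (ℕ → Fin m → ℝ) × (ℕ → Fin n × Fin m → ℝ) :=
    fun k => (stepz A B N)^[k] (ξ₀, η₀, χ₀) with hZ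
  have hZ0 : Z 0 = (ξ₀, η₀, χ₀) := rfl
  have hZs : ∀ k, Z (k+1) = stepz A B N (Z k) := fun k => Function.iterate_succ_apply' _ _ _
  have hPk : ∀ k, IsKer x u (T'+1) L (Z k) := by
    intro k; induction k with
    | zero => exact hP0
    | succ k ih =>
      obtain ⟨h1, h2⟩ := hker _ ih
      rw [hZs]; exact hshift _ ih h1 h2
  have hlast : ∀ k, (Z k).2.1 T' = 0 ∧ (Z k).2.2 T' = 0 := fun k => hker _ (hPk k)
  have hηs : ∀ k i, (Z (k+1)).2.1 (i+1) = (Z k).2.1 i := by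
    intro k i; rw [hZs]; simp [stepz]
  have hχs : ∀ k i, (Z (k+1)).2.2 (i+1) = (Z k).2.2 i := by
    intro k i; rw [hZs]; simp [stepz]
  have hξs : ∀ k, (Z k).1 = ξ₀ ᵥ* (A ^ k) := by
    intro k; induction k with
    | zero => rw [hZ0]; simp [Matrix.vecMul_one]
    | succ k ih =>
      rw [hZs]
      show (Z k).1 ᵥ* A = _
      rw [ih, Matrix.vecMul_vecMul, ← pow_succ]
  have hback : ∀ k j, k ≤ j → (Z k).2.1 j = η₀ (j - k) ∧ (Z k).2.2 j = χ₀ (j - k) := by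
    intro k; induction k with
    | zero => intro j _; rw [hZ0]; simp
    | succ k ih =>
      intro j hj
      obtain ⟨j', rfl⟩ : ∃ j', j = j' + 1 := ⟨j - 1, by omega⟩
      rw [hηs k j', hχs k j']
      have := ih j' (by omega)
      simpa [Nat.succ_sub_succ] using this
  have hfwd : ∀ j k, (Z (k+j)).2.1 j = (Z k).2.1 0 ∧ (Z (k+j)).2.2 j = (Z k).2.2 0 := by
    intro j; induction j with
    | zero => intro k; exact ⟨rfl, rfl⟩
    | succ j ih =>
      intro k
      refine ⟨?_, ?_⟩
      · rw [show k + (j+1) = (k+j)+1 from rfl, hηs (k+j) j, (ih k).1]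
      · rw [show k + (j+1) = (k+j)+1 from rfl, hχs (k+j) j, (ih k).2]
  have hη₀0 : ∀ i, i ≤ T' → η₀ i = 0 := by
    intro i hi
    have h := (hlast (T' - i)).1
    rw [(hback (T' - i) T' (by omega)).1, show T' - (T' - i) = i from by omega] at h
    exact h
  have hχ₀0 : ∀ i, i ≤ T' → χ₀ i = 0 := by
    intro i hi
    have h := (hlast (T' - i)).2
    rw [(hback (T' - i) T' (by omega)).2, show T' - (T' - i) = i from by omega] at h
    exact h
  have hBk : ∀ k, ξ₀ ᵥ* (A ^ k * B) = 0 := by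
    intro k
    have h := (hlast (k + 1 + T')).1
    rw [show k + 1 + T' = (k+1) + T' from rfl, (hfwd T' (k+1)).1] at h
    have h2 : (Z (k+1)).2.1 0 = (Z k).1 ᵥ* B := by rw [hZs]; simp [stepz]
    rw [h2, hξs, Matrix.vecMul_vecMul] at h
    exact h
  have hNk : ∀ k, ξ₀ ᵥ* (A ^ k * N) = 0 := by
    intro k
    have h := (hlast (k + 1 + T')).2
    rw [show k + 1 + T' = (k+1) + T' from rfl, (hfwd T' (k+1)).2] at h
    have h2 : (Z (k+1)).2.2 0 = (Z k).1 ᵥ* N := by rw [hZs]; simp [stepz]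
    rw [h2, hξs, Matrix.vecMul_vecMul] at h
    exact h
  have hξzero : ξ₀ = 0 := by
    apply left_ker_eq_zero (ctrbMat A B N) (by rw [hctrb, Fintype.card_fin])
    funext kj
    obtain ⟨k, j⟩ := kj
    have hrow : (ctrbMat A B N)ᵀ.mulVec ξ₀ (k, j)
        = (ξ₀ ᵥ* (A ^ (k:ℕ) * Matrix.fromCols B N)) j := by
      simp [Matrix.mulVec, Matrix.vecMul, dotProduct, Matrix.transpose_apply,
        ctrbMat, mul_comm]
    have hcj : ξ₀ ᵥ* (A ^ (k:ℕ) * Matrix.fromCols B N)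
        = Sum.elim (ξ₀ ᵥ* (A ^ (k:ℕ) * B)) (ξ₀ ᵥ* (A ^ (k:ℕ) * N)) := by
      rw [Matrix.mul_fromCols, Matrix.vecMul_fromCols]
    rw [Pi.zero_apply, hrow, hcj, hBk, hNk]
    rcases j with b | p <;> rfl
  apply hvne
  funext r
  rcases r with a | ib | ip
  · exact congrFun hξzero a
  · obtain ⟨i, b⟩ := ib
    have h := congrFun (hη₀0 ↑i (by have := i.isLt; omega)) b
    simpa [hη₀, show (i:ℕ) ≤ T' by have := i.isLt; omega] using h
  · obtain ⟨i, p⟩ := ip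
    have h := congrFun (hχ₀0 ↑i (by have := i.isLt; omega)) p
    simpa [hχ₀, show (i:ℕ) ≤ T' by have := i.isLt; omega] using h
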